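/- If μ > 0, then the quadratic form ξ ↦ (C:ξ):ξ on the space of symmetric n×n matrices is positive definite if and only if nλ + 2μ > 0. -/

import Mathlib

open Matrix

lemma trace_expand (n : ℕ) (lam mu : ℝ) (ξ : Matrix (Fin n) (Fin n) ℝ) (hsym : ξᵀ = ξ) :
    Matrix.trace
        ((lam • (Matrix.trace ξ) • (1 : Matrix (Fin n) (Fin n) ℝ) + (2 * mu) • ξ) * ξᵀ)
      = lam * (Matrix.trace ξ)^2 + 2 * mu * ∑ i, ∑ j, (ξ i j)^2 := by
  rw [hsym, add_mul, smul_mul_assoc, smul_mul_assoc, smul_mul_assoc, one_mul,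
    Matrix.trace_add, Matrix.trace_smul, Matrix.trace_smul, Matrix.trace_smul]
  have : Matrix.trace (ξ * ξ) = ∑ i, ∑ j, (ξ i j)^2 := by
    simp only [Matrix.trace, Matrix.diag, Matrix.mul_apply]
    apply Finset.sum_congr rfl
    intro i _
    apply Finset.sum_congr rfl
    intro j _
    have hji : ξ j i = ξ i j := by
      conv_lhs => rw [← hsym, Matrix.transpose_apply]
    rw [hji]; ring
  rw [this]
  simp only [smul_eq_mul]
  ring

theorem isotropic_quadratic_form_posdef_iff (n : ℕ) (hn : 1 ≤ n) (lam mu : ℝ)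
    (hmu : 0 < mu) :
    (∀ ξ : Matrix (Fin n) (Fin n) ℝ, ξᵀ = ξ → ξ ≠ 0 →
      0 < Matrix.trace
        ((lam • (Matrix.trace ξ) • (1 : Matrix (Fin n) (Fin n) ℝ) + (2 * mu) • ξ) * ξᵀ))
    ↔ 0 < (n : ℝ) * lam + 2 * mu := by
  have hnpos : (0:ℝ) < n := by exact_mod_cast hn
  constructor
  · intro h
    have hone : (1 : Matrix (Fin n) (Fin n) ℝ) ≠ 0 := by
      intro h0
      have := congrFun (congrFun h0 ⟨0, hn⟩) ⟨0, hn⟩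
      simp [Matrix.one_apply] at this
    have h1 := h 1 (Matrix.transpose_one) hone
    rw [trace_expand n lam mu 1 Matrix.transpose_one] at h1
    have htr : Matrix.trace (1 : Matrix (Fin n) (Fin n) ℝ) = (n : ℝ) := by simp
    have hsq : ∑ i : Fin n, ∑ j : Fin n, ((1 : Matrix (Fin n) (Fin n) ℝ) i j)^2 = (n : ℝ) := by
      simp [Matrix.one_apply, Finset.sum_ite_eq']
    rw [htr, hsq] at h1
    nlinarith
  · intro h ξ hsym hne
    rw [trace_expand n lam mu ξ hsym]
    set t := Matrix.trace ξ with ht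
    set S := ∑ i, ∑ j, (ξ i j)^2 with hS
    have hSpos : 0 < S := by
      have : ∃ i j, ξ i j ≠ 0 := by
        by_contra hc
        push_neg at hc
        apply hne
        ext i j
        exact hc i j
      obtain ⟨i, j, hij⟩ := this
      have h1 : 0 < ∑ j', (ξ i j')^2 := by
        apply Finset.sum_pos' (fun _ _ => sq_nonneg _)
        exact ⟨j, Finset.mem_univ j, by positivity⟩
      calc 0 < ∑ j', (ξ i j')^2 := h1
        _ ≤ S := Finset.single_le_sum (f := fun k => ∑ j', (ξ k j')^2)
            (fun k _ => Finset.sum_nonneg fun _ _ => sq_nonneg _) (Finset.mem_univ i)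
    have hcs : t^2 ≤ (n : ℝ) * S := by
      have h1 : t^2 ≤ (n : ℝ) * ∑ i, (ξ i i)^2 := by
        have := sq_sum_le_card_mul_sum_sq (s := (Finset.univ : Finset (Fin n)))
          (f := fun i => ξ i i)
        simpa [ht, Matrix.trace, Matrix.diag] using this
      have h2 : ∑ i, (ξ i i)^2 ≤ S := by
        apply Finset.sum_le_sum
        intro i _
        exact Finset.single_le_sum (f := fun j => (ξ i j)^2) (fun k _ => sq_nonneg _) (Finset.mem_univ i)
      nlinarith
    rcases le_or_gt 0 lam with hl | hl
    · nlinarith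
    · nlinarith
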